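/- Let (Ω, 𝔪, ℙ) be a probability space, K a positive natural number, I : Ω → Fin K a measurable random variable with ℙ(I = j) > 0 for every j, and G : Ω → ℝ integrable. Let p̂ : Fin K → ℝ be arbitrary with p̂ j > 0 for every j, and set μ j := (ℙ(I = j))⁻¹ · E[G · indicator of {I = j}] (the true conditional expectation of G given I = j). Define Ĝ_j(ω) := μ j + (indicator of {I = j})(ω) / (p̂ j) · (G(ω) − μ j). Then for every j, E[Ĝ_j] = μ j. -/

import Mathlib

open MeasureTheory

/-- Correct-outcome-model case of Corollary 1: if the regression model equals
the true conditional expectation of `G` given `I = j`, the doubly robust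
estimator is unbiased even with misspecified propensities `phat`. -/
theorem dr_estimator_unbiased_correct_outcome_model
    {Ω : Type*} [MeasurableSpace Ω] (ℙ : Measure Ω) [IsProbabilityMeasure ℙ]
    (K : ℕ) (hK : 0 < K)
    (I : Ω → Fin K) (hI : Measurable I)
    (hp : ∀ j : Fin K, 0 < ℙ {ω | I ω = j})
    (G : Ω → ℝ) (hG : Integrable G ℙ)
    (phat : Fin K → ℝ) (hphat : ∀ j, 0 < phat j)
    (μ : Fin K → ℝ)
    (hμ : ∀ j : Fin K, μ j = (ℙ {ω' | I ω' = j}).toReal⁻¹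
        * ∫ ω, G ω * Set.indicator {ω' | I ω' = j} (fun _ => (1 : ℝ)) ω ∂ℙ)
    (j : Fin K) :
    ∫ ω, (μ j + Set.indicator {ω' | I ω' = j} (fun _ => (1 : ℝ)) ω
        / phat j * (G ω - μ j)) ∂ℙ = μ j := by
  have hs : MeasurableSet {ω | I ω = j} := hI (measurableSet_singleton j)
  set s := {ω | I ω = j} with hsdef
  have hne : (ℙ s).toReal ≠ 0 := by
    have h1 := (hp j).ne'
    simp only [ne_eq, ENNReal.toReal_eq_zero_iff, not_or]
    exact ⟨by simpa using h1, measure_ne_top _ _⟩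
  have key : ∀ ω, μ j + Set.indicator s (fun _ => (1:ℝ)) ω / phat j * (G ω - μ j)
      = μ j + (phat j)⁻¹ * Set.indicator s (fun ω' => G ω' - μ j) ω := by
    intro ω
    by_cases h : ω ∈ s <;>
      simp [Set.indicator_of_mem, Set.indicator_of_notMem, h, div_eq_mul_inv] <;> ring
  simp_rw [key]
  have hInt : Integrable (Set.indicator s (fun ω' => G ω' - μ j)) ℙ :=
    (hG.sub (integrable_const _)).indicator hs
  rw [integral_add (integrable_const _) (hInt.const_mul _), integral_const_mul,
    integral_indicator hs, integral_const]
  have hGind : ∫ ω in s, G ω ∂ℙ = μ j * (ℙ s).toReal := by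
    have h2 := hμ j
    rw [show (∫ ω, G ω * Set.indicator {ω' | I ω' = j} (fun _ => (1 : ℝ)) ω ∂ℙ)
        = ∫ ω in s, G ω ∂ℙ by
      rw [← integral_indicator hs]
      congr 1
      funext ω
      by_cases h : I ω = j <;>
        simp [Set.indicator_of_mem, Set.indicator_of_notMem, h, hsdef]] at h2
    rw [h2, inv_mul_eq_div]
    exact (div_mul_cancel₀ _ hne).symm
  rw [integral_sub hG.integrableOn (integrableOn_const (measure_ne_top _ _)),
    integral_const, hGind]
  simp [Measure.restrict_apply_univ]
  right; show μ j * (ℙ s).toReal - (ℙ s).toReal * μ j = 0; ring
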